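/- Let ν be a Radon measure on ℝ^d, let a > 1 and b > a^d. Then for ν-almost every x ∈ ℝ^d there exists a sequence of cubes Q_k centered at x with side lengths tending to 0 such that each Q_k is (a,b)-ν-doubling, i.e., ν(a Q_k) ≤ b ν(Q_k). -/

import Mathlib

open MeasureTheory Metric Filter

/-- Iteration lemma: if all cubes centered at `x` of radius up to `δ` fail to be doubling,
then the measure decays geometrically under iteration. -/
lemma iter_lemma {d : ℕ} (ν : Measure (Fin d → ℝ)) {a b : ℝ} (ha : 0 < a) (x : Fin d → ℝ) {δ : ℝ}
    (hx : ∀ r : ℝ, 0 < r → r ≤ δ →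
      ENNReal.ofReal b * ν (closedBall x r) < ν (closedBall x (a * r))) :
    ∀ k : ℕ, ∀ r : ℝ, 0 < r → (∀ j < k, a ^ j * r ≤ δ) →
      (ENNReal.ofReal b) ^ k * ν (closedBall x r) ≤ ν (closedBall x (a ^ k * r)) := by
  intro k
  induction k with
  | zero => intro r hr _; simp
  | succ k ih =>
    intro r hr hj
    have h0 : r ≤ δ := by simpa using hj 0 (Nat.succ_pos k)
    have step : ENNReal.ofReal b * ν (closedBall x r) ≤ ν (closedBall x (a * r)) :=
      (hx r hr h0).le
    have hrec := ih (a * r) (by positivity) ?_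
    · calc (ENNReal.ofReal b) ^ (k + 1) * ν (closedBall x r)
          = (ENNReal.ofReal b) ^ k * (ENNReal.ofReal b * ν (closedBall x r)) := by ring
        _ ≤ (ENNReal.ofReal b) ^ k * ν (closedBall x (a * r)) := by
            exact mul_le_mul_right step _
        _ ≤ ν (closedBall x (a ^ k * (a * r))) := hrec
        _ = ν (closedBall x (a ^ (k + 1) * r)) := by ring_nf
    · intro j hjk
      have := hj (j + 1) (by omega)
      calc a ^ j * (a * r) = a ^ (j + 1) * r := by ring
        _ ≤ δ := this

/-- Key lemma: the set of points in a bounded region around which *all* small cubes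
(up to scale `δ`) fail to be `(a,b)`-doubling is `ν`-null. -/
lemma key_lemma {d : ℕ} (ν : Measure (Fin d → ℝ)) [IsLocallyFiniteMeasure ν]
    {a b : ℝ} (ha : 1 < a) (hb : a ^ d < b) {δ : ℝ} (hδ : 0 < δ) (m : ℕ) :
    ν {x | x ∈ closedBall (0 : Fin d → ℝ) m ∧
      ∀ r : ℝ, 0 < r → r ≤ δ →
        ENNReal.ofReal b * ν (closedBall x r) < ν (closedBall x (a * r))} = 0 := by
  have ha0 : (0:ℝ) < a := zero_lt_one.trans ha
  have hb1 : (1:ℝ) < b := lt_of_le_of_lt (one_le_pow₀ ha.le) hb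
  have hb0 : (0:ℝ) < b := zero_lt_one.trans hb1
  set S := {x | x ∈ closedBall (0 : Fin d → ℝ) m ∧
      ∀ r : ℝ, 0 < r → r ≤ δ →
        ENNReal.ofReal b * ν (closedBall x r) < ν (closedBall x (a * r))} with hS
  set c := a ^ d / b with hc
  have hc0 : 0 ≤ c := by positivity
  have hc1 : c < 1 := (div_lt_one hb0).mpr hb
  set M := ν (closedBall (0 : Fin d → ℝ) (m + a * δ)) with hM
  have hMtop : M ≠ ⊤ := measure_closedBall_lt_top.ne
  set V := volume (closedBall (0 : Fin d → ℝ) (m + δ)) with hV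
  have hVtop : V ≠ ⊤ := measure_closedBall_lt_top.ne
  -- the main estimate, for every `K`
  have main : ∀ K : ℕ, ν S ≤ M * ENNReal.ofReal (((2*δ)^d)⁻¹) * V * ENNReal.ofReal (c ^ K) := by
    intro K
    set ρ := δ / a ^ K with hρdef
    have haK : (0:ℝ) < a ^ K := by positivity
    have hρ : 0 < ρ := by positivity
    have hρδ : ρ ≤ δ := by
      have h1 : (1:ℝ) ≤ a ^ K := one_le_pow₀ ha.le
      rw [hρdef, div_le_iff₀ haK]
      nlinarith
    have hf : ∀ x ∈ S, ∀ ε > 0, (Set.Ioo (0:ℝ) ρ ∩ Set.Ioo 0 ε).Nonempty := by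
      intro x _ ε hε
      have h0 : 0 < min ρ ε := lt_min hρ hε
      refine ⟨min ρ ε / 2, ⟨by positivity, ?_⟩, by positivity, ?_⟩
      · have := min_le_left ρ ε; linarith
      · have := min_le_right ρ ε; linarith
    obtain ⟨t, r, t_count, t_sub, hrmem, hcov, hdisj⟩ :=
      Besicovitch.exists_disjoint_closedBall_covering_ae ν (fun _ => Set.Ioo (0:ℝ) ρ) S hf
        (fun _ => ρ) (fun _ _ => hρ)
    -- per-ball estimate
    have ball_bound : ∀ x ∈ t, ν (closedBall x (r x)) ≤
        M * ENNReal.ofReal (((2*δ)^d)⁻¹ * c ^ K) * volume (closedBall x (r x)) := by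
      intro x hxt
      have hxS : x ∈ S := t_sub hxt
      obtain ⟨hr0, hrρ⟩ : r x ∈ Set.Ioo (0:ℝ) ρ := (hrmem x hxt).1
      -- find the doubling scale k
      have hex : ∃ k : ℕ, δ < a ^ k * r x := by
        obtain ⟨k, hk⟩ := pow_unbounded_of_one_lt (δ / r x) ha
        exact ⟨k, by rwa [div_lt_iff₀ hr0] at hk⟩
      classical
      obtain ⟨k, hk, hjk⟩ : ∃ k : ℕ, δ < a ^ k * r x ∧ ∀ j < k, a ^ j * r x ≤ δ :=
        ⟨Nat.find hex, Nat.find_spec hex, fun j hj => not_lt.1 (Nat.find_min hex hj)⟩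
      have hKk : K ≤ k := by
        by_contra h
        push_neg at h
        have hak : a ^ k ≤ a ^ K := pow_le_pow_right₀ ha.le h.le
        have h2 : a ^ K * ρ = δ := by rw [hρdef]; field_simp
        nlinarith [mul_lt_mul_of_pos_left hrρ (pow_pos ha0 k),
          mul_le_mul_of_nonneg_right hak hρ.le]
      have hkpos : k ≠ 0 := by
        intro h0
        rw [h0] at hk
        simp at hk
        nlinarith
      have hkaδ : a ^ k * r x ≤ a * δ := by
        obtain ⟨j, rfl⟩ := Nat.exists_eq_succ_of_ne_zero hkpos
        have := hjk j (by omega)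
        calc a ^ (j + 1) * r x = a * (a ^ j * r x) := by ring
          _ ≤ a * δ := by nlinarith
      -- iterate
      have hiter := iter_lemma ν ha0 x hxS.2 k (r x) hr0 hjk
      have hsub : closedBall x (a ^ k * r x) ⊆ closedBall (0 : Fin d → ℝ) (m + a * δ) := by
        apply closedBall_subset_closedBall'
        have hxm : dist x (0 : Fin d → ℝ) ≤ m := hxS.1
        linarith
      have hle : (ENNReal.ofReal b) ^ k * ν (closedBall x (r x)) ≤ M :=
        hiter.trans (measure_mono hsub)
      have hbk0 : (ENNReal.ofReal b) ^ k ≠ 0 := by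
        apply pow_ne_zero
        simp [ENNReal.ofReal_eq_zero, not_le, hb0]
      have hbktop : (ENNReal.ofReal b) ^ k ≠ ⊤ := by
        apply ENNReal.pow_ne_top ENNReal.ofReal_ne_top
      have hν : ν (closedBall x (r x)) ≤ M * ENNReal.ofReal ((b ^ k)⁻¹) := by
        have : ν (closedBall x (r x)) ≤ M / (ENNReal.ofReal b) ^ k := by
          rw [ENNReal.le_div_iff_mul_le (Or.inl hbk0) (Or.inl hbktop), mul_comm]
          exact hle
        rwa [ENNReal.div_eq_inv_mul, ← ENNReal.ofReal_pow hb0.le,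
          ← ENNReal.ofReal_inv_of_pos (by positivity), mul_comm] at this
      -- real-number estimate
      have hreal : (b ^ k)⁻¹ ≤ ((2*δ)^d)⁻¹ * c ^ K * (2 * r x) ^ d := by
        have h1 : (b:ℝ)⁻¹ = c * (a ^ d)⁻¹ := by
          rw [hc]; field_simp
        have h2 : ((b:ℝ) ^ k)⁻¹ = c ^ k * ((a ^ k)⁻¹) ^ d := by
          rw [hc, div_pow, inv_pow, ← pow_mul, ← pow_mul, mul_comm d k]
          field_simp
        rw [h2]
        have h3 : c ^ k ≤ c ^ K := pow_le_pow_of_le_one hc0 hc1.le hKk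
        have h4 : ((a:ℝ) ^ k)⁻¹ ≤ r x / δ := by
          have hak : (0:ℝ) < a ^ k := pow_pos ha0 k
          rw [inv_eq_one_div, div_le_div_iff₀ hak hδ]
          nlinarith
        have h5 : (((a:ℝ) ^ k)⁻¹) ^ d ≤ (r x / δ) ^ d :=
          pow_le_pow_left₀ (by positivity) h4 d
        have h6 : ((2*δ:ℝ)^d)⁻¹ * (2 * r x) ^ d = (r x / δ) ^ d := by
          rw [← inv_pow, ← mul_pow]
          congr 1
          field_simp
        calc c ^ k * (((a:ℝ) ^ k)⁻¹) ^ d ≤ c ^ K * (r x / δ) ^ d := by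
              apply mul_le_mul h3 h5 (by positivity) (by positivity)
          _ = ((2*δ)^d)⁻¹ * c ^ K * (2 * r x) ^ d := by rw [← h6]; ring
      calc ν (closedBall x (r x)) ≤ M * ENNReal.ofReal ((b ^ k)⁻¹) := hν
        _ ≤ M * ENNReal.ofReal (((2*δ)^d)⁻¹ * c ^ K * (2 * r x) ^ d) := by
            exact mul_le_mul_right (ENNReal.ofReal_le_ofReal hreal) M
        _ = M * ENNReal.ofReal (((2*δ)^d)⁻¹ * c ^ K) * volume (closedBall x (r x)) := by
            have hv : volume (closedBall x (r x)) = ENNReal.ofReal ((2 * r x) ^ d) := by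
              rw [ENNReal.ofReal_pow (by positivity)]
              simpa using volume_pi_closedBall x hr0.le
            rw [hv, ENNReal.ofReal_mul (by positivity)]
            exact (mul_assoc _ _ _).symm
    -- sum up
    have hcount := t_count
    calc ν S ≤ ν (S \ ⋃ x ∈ t, closedBall x (r x)) + ν (⋃ x ∈ t, closedBall x (r x)) := by
          apply (measure_mono (Set.subset_diff_union S _)).trans (measure_union_le _ _)
      _ = ν (⋃ x ∈ t, closedBall x (r x)) := by rw [hcov, zero_add]
      _ ≤ ∑' x : t, ν (closedBall (x : Fin d → ℝ) (r (x : Fin d → ℝ))) := measure_biUnion_le ν hcount _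
      _ ≤ ∑' x : t, M * ENNReal.ofReal (((2*δ)^d)⁻¹ * c ^ K) * volume (closedBall (x : Fin d → ℝ) (r (x : Fin d → ℝ))) :=
          ENNReal.tsum_le_tsum (fun x => ball_bound x x.2)
      _ = M * ENNReal.ofReal (((2*δ)^d)⁻¹ * c ^ K) * ∑' x : t, volume (closedBall (x : Fin d → ℝ) (r (x : Fin d → ℝ))) := by
          rw [ENNReal.tsum_mul_left]
      _ = M * ENNReal.ofReal (((2*δ)^d)⁻¹ * c ^ K) *
            volume (⋃ x ∈ t, closedBall x (r x)) := by
          rw [measure_biUnion hcount hdisj (fun _ _ => measurableSet_closedBall)]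
      _ ≤ M * ENNReal.ofReal (((2*δ)^d)⁻¹ * c ^ K) * V := by
          apply mul_le_mul_right
          apply measure_mono
          apply Set.iUnion₂_subset
          intro x hxt
          apply closedBall_subset_closedBall'
          have hxm : dist x (0 : Fin d → ℝ) ≤ m := (t_sub hxt).1
          have : r x ≤ ρ := ((hrmem x hxt).1).2.le
          linarith
      _ = M * ENNReal.ofReal (((2*δ)^d)⁻¹) * V * ENNReal.ofReal (c ^ K) := by
          rw [ENNReal.ofReal_mul (by positivity)]
          ring
  -- pass to the limit K → ∞
  have hlim : Tendsto (fun K : ℕ => M * ENNReal.ofReal (((2*δ)^d)⁻¹) * V *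
      ENNReal.ofReal (c ^ K)) atTop (nhds 0) := by
    have h1 : Tendsto (fun K : ℕ => ENNReal.ofReal (c ^ K)) atTop (nhds 0) := by
      have := ENNReal.tendsto_ofReal (tendsto_pow_atTop_nhds_zero_of_lt_one hc0 hc1)
      simpa using this
    have h2 := ENNReal.Tendsto.const_mul
      (a := M * ENNReal.ofReal (((2*δ)^d)⁻¹) * V) h1
      (Or.inr (by simp [ENNReal.mul_ne_top, hMtop, hVtop, ENNReal.ofReal_ne_top]))
    simpa using h2
  have := le_of_tendsto_of_tendsto' (tendsto_const_nhds (x := ν S) (f := atTop)) hlim main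
  simpa using this

theorem stmt0 (d : ℕ) (ν : Measure (Fin d → ℝ)) [IsLocallyFiniteMeasure ν]
    (a b : ℝ) (ha : 1 < a) (hb : a ^ d < b) :
    ∀ᵐ x ∂ν, ∃ l : ℕ → ℝ, (∀ k, 0 < l k) ∧ Tendsto l atTop (nhds 0) ∧
      ∀ k, ν (closedBall x (a * l k / 2)) ≤ ENNReal.ofReal b * ν (closedBall x (l k / 2)) := by
  have ha0 : (0:ℝ) < a := zero_lt_one.trans ha
  rw [ae_iff]
  apply measure_mono_null
    (t := ⋃ (n : ℕ) (m : ℕ), {x | x ∈ closedBall (0 : Fin d → ℝ) m ∧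
      ∀ r : ℝ, 0 < r → r ≤ 1/((n:ℝ)+1) →
        ENNReal.ofReal b * ν (closedBall x r) < ν (closedBall x (a * r))})
  · intro x hx
    simp only [Set.mem_setOf_eq] at hx
    by_contra hmem
    apply hx
    simp only [Set.mem_iUnion, Set.mem_setOf_eq, not_exists] at hmem
    obtain ⟨m, hm⟩ : ∃ m : ℕ, x ∈ closedBall (0 : Fin d → ℝ) m :=
      ⟨⌈dist x 0⌉₊, mem_closedBall.2 (Nat.le_ceil _)⟩
    have hch : ∀ n : ℕ, ∃ r : ℝ, 0 < r ∧ r ≤ 1/((n:ℝ)+1) ∧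
        ν (closedBall x (a * r)) ≤ ENNReal.ofReal b * ν (closedBall x r) := by
      intro n
      have h := hmem n m
      push_neg at h
      obtain ⟨r, hr0, hrle, hrdb⟩ := h hm
      exact ⟨r, hr0, hrle, hrdb⟩
    choose r hr0 hrle hrdb using hch
    refine ⟨fun n => 2 * r n, fun n => by have := hr0 n; show (0:ℝ) < 2 * r n; linarith, ?_, ?_⟩
    · have hg : Tendsto (fun n : ℕ => 2 * (1/((n:ℝ)+1))) atTop (nhds 0) := by
        have := tendsto_one_div_add_atTop_nhds_zero_nat.const_mul (2:ℝ)
        simpa using this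
      apply squeeze_zero (fun n => by have := hr0 n; show (0:ℝ) ≤ 2 * r n; linarith)
        (fun n => ?_) hg
      show 2 * r n ≤ 2 * (1/((n:ℝ)+1))
      have := hrle n
      linarith
    · intro n
      show ν (closedBall x (a * (2 * r n) / 2)) ≤ ENNReal.ofReal b * ν (closedBall x (2 * r n / 2))
      have e1 : a * (2 * r n) / 2 = a * r n := by ring
      have e2 : (2 * r n) / 2 = r n := by ring
      rw [e1, e2]
      exact hrdb n
  · exact measure_iUnion_null fun n => measure_iUnion_null fun m =>
      key_lemma ν ha hb (by positivity) m
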